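/- Let a, b ≥ 0 be integers, n = a+b+1, and R = ℤ[z_1,…,z_a, y_1,…,y_b, x]. Let M = D_X(Λ(a,b,0,1)) be the n×n matrix over R with rows and columns indexed by K ⊔ T ⊔ {*} (|K| = a, |T| = b): diagonal entries z_1,…,z_a on K, y_1,…,y_b on T, and x at *; off-diagonal entries: 1 between two distinct K-indices, 1 from a K-index to a T-index, 2 from a K-index to *, 2 from a T-index to a K-index, 2 between two distinct T-indices, 1 from a T-index to *, and 1 from * to every K-index and every T-index. Let L be the n×n matrix over R with rows and columns indexed by {*} ⊔ T ⊔ K, with entries: L(*,*) = x, L(*,t) = 1 for every t ∈ T, L(*,k) = 1 for every k ∈ K; for t ∈ T: L(t,*) = 1 − 2x, L(t,t) = y_t − 2, and all other entries in row t are 0; for k ∈ K: L(k,*) = 2 − x, L(k,k) = z_k − 1, and all other entries in row k are 0. Then for every 1 ≤ j ≤ n, the ideal of R generated by the determinants of all j×j submatrices of M equals the ideal generated by the determinants of all j×j submatrices of L. -/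

import Mathlib

open MvPolynomial

/-- The ideal generated by the determinants of all `j × j` submatrices of a square
matrix `M` (choices of `j` rows and `j` columns). -/
def minorsIdeal {R : Type*} [CommRing R] {m : Type*} (M : Matrix m m R) (k : ℕ) : Ideal R :=
  Ideal.span { p | ∃ (r c : Fin k → m), Function.Injective r ∧ Function.Injective c ∧
    p = (M.submatrix r c).det }

/-- Variables: `z_1, …, z_a` (left), `y_1, …, y_b` (middle), `x` (right). -/
abbrev LVar (a b : ℕ) := Fin a ⊕ Fin b ⊕ Unit

/-- The matrix `D_X(Λ(a,b,0,1))`, with rows and columns indexed by `K ⊔ T ⊔ {*}`. -/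
noncomputable def lambdaDX (a b : ℕ) :
    Matrix (Fin a ⊕ Fin b ⊕ Unit) (Fin a ⊕ Fin b ⊕ Unit) (MvPolynomial (LVar a b) ℤ) :=
  Matrix.of fun p q =>
    match p, q with
    | .inl i, .inl j => if i = j then X (.inl i) else 1
    | .inl _, .inr (.inl _) => 1
    | .inl _, .inr (.inr _) => 2
    | .inr (.inl _), .inl _ => 2
    | .inr (.inl i), .inr (.inl j) => if i = j then X (.inr (.inl i)) else 2
    | .inr (.inl _), .inr (.inr _) => 1
    | .inr (.inr _), .inl _ => 1
    | .inr (.inr _), .inr (.inl _) => 1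
    | .inr (.inr _), .inr (.inr _) => X (.inr (.inr ()))

/-- The matrix `L`, with rows and columns indexed by `{*} ⊔ T ⊔ K`. -/
noncomputable def Lmatrix (a b : ℕ) :
    Matrix (Unit ⊕ Fin b ⊕ Fin a) (Unit ⊕ Fin b ⊕ Fin a) (MvPolynomial (LVar a b) ℤ) :=
  Matrix.of fun p q =>
    match p, q with
    | .inl _, .inl _ => X (.inr (.inr ()))
    | .inl _, .inr (.inl _) => 1
    | .inl _, .inr (.inr _) => 1
    | .inr (.inl _), .inl _ => 1 - 2 * X (.inr (.inr ()))
    | .inr (.inl t), .inr (.inl t') => if t = t' then X (.inr (.inl t)) - 2 else 0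
    | .inr (.inl _), .inr (.inr _) => 0
    | .inr (.inr _), .inl _ => 2 - X (.inr (.inr ()))
    | .inr (.inr _), .inr (.inl _) => 0
    | .inr (.inr k), .inr (.inr k') => if k = k' then X (.inl k) - 1 else 0


section Aux

variable {R : Type*} [CommRing R] {n : Type*} [Fintype n] [DecidableEq n]

lemma minorsIdeal_transvection_mul_le (i j : n) (hij : i ≠ j) (c : R)
    (M : Matrix n n R) (k : ℕ) :
    minorsIdeal (Matrix.transvection i j c * M) k ≤ minorsIdeal M k := by
  rw [minorsIdeal, Ideal.span_le]
  rintro p ⟨r, cs, hr, hc, rfl⟩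
  by_cases hi : ∃ x, r x = i
  · obtain ⟨x0, hx0⟩ := hi
    have hsub : (Matrix.transvection i j c * M).submatrix r cs
        = (M.submatrix r cs).updateRow x0
            ((fun y => M i (cs y)) + c • (fun y => M j (cs y))) := by
      ext x y
      by_cases hx : x = x0
      · subst hx
        simp [Matrix.updateRow_self, Matrix.submatrix_apply, hx0]
      · have hri : r x ≠ i := fun h => hx (hr (h.trans hx0.symm))
        simp [Matrix.updateRow_ne hx, Matrix.submatrix_apply,
          Matrix.transvection_mul_apply_of_ne _ _ _ _ hri]
    have h1 : (M.submatrix r cs).updateRow x0 (fun y => M i (cs y)) = M.submatrix r cs := by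
      ext x y
      by_cases hx : x = x0
      · subst hx; simp [hx0]
      · simp [Matrix.updateRow_ne hx]
    have h2 : (M.submatrix r cs).updateRow x0 (fun y => M j (cs y))
        = M.submatrix (Function.update r x0 j) cs := by
      ext x y
      by_cases hx : x = x0
      · subst hx; simp
      · simp [Matrix.updateRow_ne hx, Function.update_of_ne hx]
    rw [SetLike.mem_coe, hsub, Matrix.det_updateRow_add, Matrix.det_updateRow_smul, h1, h2]
    refine add_mem (Ideal.subset_span ⟨r, cs, hr, hc, rfl⟩) (Ideal.mul_mem_left _ _ ?_)
    by_cases hj : ∃ x, r x = j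
    · obtain ⟨x1, hx1⟩ := hj
      have hne : x0 ≠ x1 := by
        intro h; apply hij; rw [← hx0, h, hx1]
      have hdet : (M.submatrix (Function.update r x0 j) cs).det = 0 := by
        apply Matrix.det_zero_of_row_eq hne
        ext y
        simp [Matrix.submatrix_apply, Function.update_of_ne (Ne.symm hne), hx1]
      rw [hdet]; exact Ideal.zero_mem _
    · push_neg at hj
      refine Ideal.subset_span ⟨Function.update r x0 j, cs, ?_, hc, rfl⟩
      intro x y hxy
      by_cases hx : x = x0 <;> by_cases hy : y = x0
      · rw [hx, hy]
      · exfalso; rw [hx] at hxy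
        simp only [Function.update_self, Function.update_of_ne hy] at hxy
        exact hj y hxy.symm
      · exfalso; rw [hy] at hxy
        simp only [Function.update_self, Function.update_of_ne hx] at hxy
        exact hj x hxy
      · rw [Function.update_of_ne hx, Function.update_of_ne hy] at hxy
        exact hr hxy
  · push_neg at hi
    have hsub : (Matrix.transvection i j c * M).submatrix r cs = M.submatrix r cs := by
      ext x y
      simp [Matrix.submatrix_apply, Matrix.transvection_mul_apply_of_ne _ _ _ _ (hi x)]
    rw [SetLike.mem_coe, hsub]
    exact Ideal.subset_span ⟨r, cs, hr, hc, rfl⟩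

lemma minorsIdeal_transvection_mul (i j : n) (hij : i ≠ j) (c : R)
    (M : Matrix n n R) (k : ℕ) :
    minorsIdeal (Matrix.transvection i j c * M) k = minorsIdeal M k := by
  refine le_antisymm (minorsIdeal_transvection_mul_le i j hij c M k) ?_
  have h : M = Matrix.transvection i j (-c) * (Matrix.transvection i j c * M) := by
    rw [← mul_assoc, Matrix.transvection_mul_transvection_same _ _ hij, neg_add_cancel,
      Matrix.transvection_zero, one_mul]
  conv_lhs => rw [h]
  exact minorsIdeal_transvection_mul_le i j hij (-c) _ k

lemma minorsIdeal_transvection_list_mul (l : List (n × n × R))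
    (hl : ∀ p ∈ l, p.1 ≠ p.2.1) (M : Matrix n n R) (k : ℕ) :
    minorsIdeal ((l.map fun p => Matrix.transvection p.1 p.2.1 p.2.2).prod * M) k
      = minorsIdeal M k := by
  induction l with
  | nil => simp
  | cons a l ih =>
    rw [List.map_cons, List.prod_cons, mul_assoc,
      minorsIdeal_transvection_mul a.1 a.2.1 (hl a (List.mem_cons_self)) a.2.2,
      ih (fun p hp => hl p (List.mem_cons_of_mem a hp))]

lemma minorsIdeal_submatrix_equiv {m m' : Type*} (e : m' ≃ m) (M : Matrix m m R) (k : ℕ) :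
    minorsIdeal (M.submatrix e e) k = minorsIdeal M k := by
  apply le_antisymm
  · rw [minorsIdeal, Ideal.span_le]
    rintro p ⟨r, cs, hr, hc, rfl⟩
    exact Ideal.subset_span ⟨e ∘ r, e ∘ cs, e.injective.comp hr, e.injective.comp hc,
      by rw [Matrix.submatrix_submatrix]⟩
  · rw [minorsIdeal, Ideal.span_le]
    rintro p ⟨r, cs, hr, hc, rfl⟩
    refine Ideal.subset_span ⟨e.symm ∘ r, e.symm ∘ cs, e.symm.injective.comp hr,
      e.symm.injective.comp hc, ?_⟩
    rw [Matrix.submatrix_submatrix]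
    congr 1 <;> ext x <;> simp

lemma std_mul_apply (i j : n) (c : R) (M : Matrix n n R) (p q : n) :
    (Matrix.single i j c * M) p q = if p = i then c * M j q else 0 := by
  by_cases h : p = i
  · subst h; simp
  · simp [h]

lemma prod_one_add {A : Type*} [Ring A] (l : List A)
    (h : ∀ x ∈ l, ∀ y ∈ l, x * y = 0) : (l.map (1 + ·)).prod = 1 + l.sum := by
  induction l with
  | nil => simp
  | cons a l ih =>
    rw [List.map_cons, List.prod_cons, ih (fun x hx y hy =>
      h x (List.mem_cons_of_mem a hx) y (List.mem_cons_of_mem a hy))]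
    have ha : a * l.sum = 0 := by
      have h0 : l = l.map id := by simp
      rw [h0, ← List.sum_map_mul_left]
      refine List.sum_eq_zero fun x hx => ?_
      simp only [List.mem_map] at hx
      obtain ⟨y, hy, rfl⟩ := hx
      exact h a (List.mem_cons_self) y (List.mem_cons_of_mem a hy)
    rw [List.sum_cons, add_mul, mul_add, mul_add, one_mul, one_mul, ha, add_zero, mul_one]
    abel

end Aux

/-- The reindexing equivalence `{*} ⊔ T ⊔ K ≃ K ⊔ T ⊔ {*}`. -/
def sigmaEquiv (a b : ℕ) : (Unit ⊕ Fin b ⊕ Fin a) ≃ (Fin a ⊕ Fin b ⊕ Unit) where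
  toFun p := match p with
    | .inl _ => .inr (.inr ())
    | .inr (.inl t) => .inr (.inl t)
    | .inr (.inr k) => .inl k
  invFun p := match p with
    | .inl k => .inr (.inr k)
    | .inr (.inl t) => .inr (.inl t)
    | .inr (.inr _) => .inl ()
  left_inv := by rintro (⟨⟩ | t | k) <;> rfl
  right_inv := by rintro (k | t | ⟨⟩) <;> rfl

/-- The list of row operations (as transvection data) turning the reindexed
`lambdaDX` into `Lmatrix`. -/
noncomputable def tList (a b : ℕ) :
    List ((Unit ⊕ Fin b ⊕ Fin a) × (Unit ⊕ Fin b ⊕ Fin a) × MvPolynomial (LVar a b) ℤ) :=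
  (List.ofFn fun t : Fin b => (Sum.inr (Sum.inl t), Sum.inl (), (-2 : MvPolynomial (LVar a b) ℤ)))
    ++ (List.ofFn fun k : Fin a =>
        (Sum.inr (Sum.inr k), Sum.inl (), (-1 : MvPolynomial (LVar a b) ℤ)))

lemma tList_prod (a b : ℕ) :
    ((tList a b).map fun p => Matrix.transvection p.1 p.2.1 p.2.2).prod
      = 1 + (∑ t : Fin b, Matrix.single (Sum.inr (Sum.inl t)) (Sum.inl ())
              (-2 : MvPolynomial (LVar a b) ℤ))
          + ∑ k : Fin a, Matrix.single (Sum.inr (Sum.inr k)) (Sum.inl ())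
              (-1 : MvPolynomial (LVar a b) ℤ) := by
  set sList : List (Matrix (Unit ⊕ Fin b ⊕ Fin a) (Unit ⊕ Fin b ⊕ Fin a)
      (MvPolynomial (LVar a b) ℤ)) :=
    (List.ofFn fun t : Fin b => Matrix.single (Sum.inr (Sum.inl t)) (Sum.inl ())
        (-2 : MvPolynomial (LVar a b) ℤ))
      ++ (List.ofFn fun k : Fin a => Matrix.single (Sum.inr (Sum.inr k)) (Sum.inl ())
        (-1 : MvPolynomial (LVar a b) ℤ)) with hsList
  have hmap : ((tList a b).map fun p => Matrix.transvection p.1 p.2.1 p.2.2)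
      = sList.map (1 + ·) := by
    simp only [tList, hsList, List.map_append, List.map_ofFn]
    rfl
  have hzero : ∀ x ∈ sList, ∀ y ∈ sList, x * y = 0 := by
    intro x hx y hy
    simp only [hsList, List.mem_append, List.mem_ofFn, Set.mem_range] at hx hy
    obtain (⟨t, rfl⟩ | ⟨k, rfl⟩) := hx <;> obtain (⟨t', rfl⟩ | ⟨k', rfl⟩) := hy <;>
      · apply Matrix.single_mul_single_of_ne
        exact Sum.inl_ne_inr
  rw [hmap, prod_one_add sList hzero, hsList, List.sum_append, List.sum_ofFn, List.sum_ofFn,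
    add_assoc]

lemma Lfactorization (a b : ℕ) :
    Lmatrix a b = ((tList a b).map fun p => Matrix.transvection p.1 p.2.1 p.2.2).prod
      * ((lambdaDX a b).submatrix (sigmaEquiv a b) (sigmaEquiv a b)) := by
  rw [tList_prod]
  refine Matrix.ext fun p q => ?_
  rw [Matrix.add_mul, Matrix.add_mul, Matrix.one_mul, Finset.sum_mul, Finset.sum_mul]
  simp only [Matrix.add_apply, Matrix.sum_apply, std_mul_apply]
  rcases p with ⟨⟩ | t | k <;> rcases q with ⟨⟩ | t' | k' <;>
    · simp only [Sum.inr.injEq, Sum.inl.injEq, reduceCtorEq, if_false, if_true,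
        Finset.sum_const_zero, Finset.sum_ite_eq, Finset.sum_ite_eq', Finset.mem_univ, if_true,
        Lmatrix, lambdaDX, sigmaEquiv, Matrix.submatrix_apply, Matrix.of_apply, Equiv.coe_fn_mk]
      first
      | (split_ifs <;> ring)
      | ring

theorem minors_ideals_lambda_eq_L (a b : ℕ) :
    ∀ j : ℕ, 1 ≤ j → j ≤ a + b + 1 →
      minorsIdeal (lambdaDX a b) j = minorsIdeal (Lmatrix a b) j := by
  intro j _ _
  have hne : ∀ p ∈ tList a b, p.1 ≠ p.2.1 := by
    intro p hp
    simp only [tList, List.mem_append, List.mem_ofFn, Set.mem_range] at hp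
    obtain (⟨t, rfl⟩ | ⟨k, rfl⟩) := hp <;> simp
  rw [Lfactorization a b, minorsIdeal_transvection_list_mul _ hne,
    minorsIdeal_submatrix_equiv]
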